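/- Let μ, ν ∈ 𝒫(ℝ) with μ ≼_cx ν (increasing convex order), and for n ∈ ℕ let μⁿ, νⁿ be the grid discretisations defined by μⁿ({k/n}) := ∫_{[(k−1)/n,(k+1)/n)} (1 − |nx − k|) μ(dx) and likewise for νⁿ. Then μⁿ ≼_cx νⁿ. -/

import Mathlib

open MeasureTheory Filter

namespace MMOT

/-- Weight of the discretisation of `μ` at the grid point `k/n`:
`∫_{[(k−1)/n,(k+1)/n)} (1 − |nx − k|) μ(dx)`. -/
noncomputable def gridWeight (μ : Measure ℝ) (n : ℕ) (k : ℤ) : ℝ :=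
  ∫ x in Set.Ico (((k : ℝ) - 1) / n) (((k : ℝ) + 1) / n), (1 - |(n : ℝ) * x - (k : ℝ)|) ∂μ

/-- The grid discretisation `μⁿ` of `μ`, supported on `{k/n : k ∈ ℤ}`. -/
noncomputable def gridDisc (μ : Measure ℝ) (n : ℕ) : Measure ℝ :=
  Measure.sum fun k : ℤ => ENNReal.ofReal (gridWeight μ n k) • Measure.dirac ((k : ℝ) / n)

/-- The convex order `μ ≼_cx ν` on probability measures on `ℝ`:
`∫ f dμ ≤ ∫ f dν` for all (integrable) convex functions `f`. -/
def ConvexOrder (μ ν : Measure ℝ) : Prop :=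
  ∀ f : ℝ → ℝ, ConvexOn ℝ Set.univ f → Integrable f μ → Integrable f ν →
    ∫ x, f x ∂μ ≤ ∫ x, f x ∂ν

/-! ### Auxiliary definitions -/

/-- The tent function at grid point `k/n`, as an indicator on `[(k-1)/n, (k+1)/n)`. -/
noncomputable def tentI (n : ℕ) (k : ℤ) : ℝ → ℝ :=
  (Set.Ico (((k : ℝ) - 1) / n) (((k : ℝ) + 1) / n)).indicator
    (fun x => 1 - |(n : ℝ) * x - (k : ℝ)|)

/-- The piecewise-linear interpolation of `f` at the grid points `k/n`. -/
noncomputable def interp (f : ℝ → ℝ) (n : ℕ) (x : ℝ) : ℝ :=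
  (1 - ((n:ℝ) * x - (⌊(n:ℝ) * x⌋ : ℝ))) * f ((⌊(n:ℝ) * x⌋ : ℝ) / n) +
    ((n:ℝ) * x - (⌊(n:ℝ) * x⌋ : ℝ)) * f (((⌊(n:ℝ) * x⌋ : ℝ) + 1) / n)

/-! ### Elementary facts about the tent functions -/

lemma mem_Ico_iff {n : ℕ} (hn : 0 < n) (k : ℤ) (x : ℝ) :
    x ∈ Set.Ico (((k : ℝ) - 1) / n) (((k : ℝ) + 1) / n) ↔
      (k : ℝ) - 1 ≤ (n : ℝ) * x ∧ (n : ℝ) * x < (k : ℝ) + 1 := by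
  have hN : (0:ℝ) < n := by exact_mod_cast hn
  rw [Set.mem_Ico, div_le_iff₀ hN, lt_div_iff₀ hN]
  constructor <;> rintro ⟨h1, h2⟩ <;> constructor <;> nlinarith

lemma tentI_mem (n : ℕ) (hn : 0 < n) (k : ℤ) (x : ℝ) :
    0 ≤ tentI n k x ∧ tentI n k x ≤ 1 := by
  unfold tentI
  rcases Classical.em (x ∈ Set.Ico (((k : ℝ) - 1) / n) (((k : ℝ) + 1) / n)) with h | h
  · rw [Set.indicator_of_mem h]
    obtain ⟨h1, h2⟩ := (mem_Ico_iff hn k x).mp h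
    have : |(n : ℝ) * x - (k : ℝ)| ≤ 1 := abs_le.2 ⟨by linarith, by linarith⟩
    have h0 := abs_nonneg ((n : ℝ) * x - (k : ℝ))
    exact ⟨by linarith, by linarith⟩
  · rw [Set.indicator_of_notMem h]; norm_num

lemma gridWeight_nonneg {n : ℕ} (hn : 0 < n) (μ : Measure ℝ) (k : ℤ) :
    0 ≤ gridWeight μ n k := by
  apply setIntegral_nonneg measurableSet_Ico
  intro x hx
  obtain ⟨h1, h2⟩ := (mem_Ico_iff hn k x).mp hx
  have : |(n:ℝ)*x - (k:ℝ)| ≤ 1 := abs_le.2 ⟨by linarith, by linarith⟩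
  linarith

lemma tentI_measurable (n : ℕ) (k : ℤ) : Measurable (tentI n k) := by
  unfold tentI
  exact Measurable.indicator (by fun_prop) measurableSet_Ico

lemma tentI_integrable {n : ℕ} (hn : 0 < n) {μ : Measure ℝ} [IsFiniteMeasure μ] (k : ℤ) :
    Integrable (tentI n k) μ := by
  refine Integrable.mono' (integrable_const 1) (tentI_measurable n k).aestronglyMeasurable ?_
  filter_upwards with x
  rw [Real.norm_eq_abs, abs_le]
  have := tentI_mem n hn k x
  exact ⟨by linarith [this.1], this.2⟩

lemma integral_tentI {n : ℕ} (μ : Measure ℝ) (k : ℤ) :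
    ∫ x, tentI n k x ∂μ = gridWeight μ n k := by
  rw [tentI, integral_indicator measurableSet_Ico]; rfl

lemma lintegral_tentI {n : ℕ} (hn : 0 < n) {μ : Measure ℝ} [IsFiniteMeasure μ] (k : ℤ) :
    ∫⁻ x, ‖tentI n k x‖₊ ∂μ = ENNReal.ofReal (gridWeight μ n k) := by
  have h1 : ∀ x, (‖tentI n k x‖₊ : ENNReal) = ENNReal.ofReal (tentI n k x) := fun x =>
    Real.enorm_eq_ofReal (tentI_mem n hn k x).1
  simp_rw [h1]
  rw [← ofReal_integral_eq_lintegral_ofReal (tentI_integrable hn k)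
    (Filter.Eventually.of_forall fun x => (tentI_mem n hn k x).1), integral_tentI]

lemma lintegral_gridDisc {n : ℕ} (μ : Measure ℝ) (f : ℝ → ℝ) :
    ∫⁻ x, ‖f x‖₊ ∂(gridDisc μ n)
      = ∑' k : ℤ, ENNReal.ofReal (gridWeight μ n k) * ‖f ((k:ℝ)/n)‖₊ := by
  rw [gridDisc, lintegral_sum_measure]
  refine tsum_congr fun k => ?_
  rw [lintegral_smul_measure, lintegral_dirac, smul_eq_mul]

/-! ### Pointwise identification of the tent expansion with the interpolation -/

lemma tentI_floor {n : ℕ} (hn : 0 < n) (x : ℝ) :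
    tentI n ⌊(n:ℝ)*x⌋ x = 1 - ((n:ℝ)*x - (⌊(n:ℝ)*x⌋ : ℝ)) := by
  have h1 : (⌊(n:ℝ)*x⌋ : ℝ) ≤ (n:ℝ)*x := Int.floor_le _
  have h2 : (n:ℝ)*x < (⌊(n:ℝ)*x⌋ : ℝ) + 1 := Int.lt_floor_add_one _
  rw [tentI, Set.indicator_of_mem ((mem_Ico_iff hn _ _).mpr ⟨by linarith, h2⟩)]
  rw [abs_of_nonneg (by linarith)]

lemma tentI_floor_succ {n : ℕ} (hn : 0 < n) (x : ℝ) :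
    tentI n (⌊(n:ℝ)*x⌋ + 1) x = (n:ℝ)*x - (⌊(n:ℝ)*x⌋ : ℝ) := by
  have h1 : (⌊(n:ℝ)*x⌋ : ℝ) ≤ (n:ℝ)*x := Int.floor_le _
  have h2 : (n:ℝ)*x < (⌊(n:ℝ)*x⌋ : ℝ) + 1 := Int.lt_floor_add_one _
  rw [tentI, Set.indicator_of_mem ((mem_Ico_iff hn _ _).mpr
    (by push_cast; constructor <;> linarith))]
  push_cast
  rw [abs_of_nonpos (by linarith)]
  ring

lemma tentI_eq_zero {n : ℕ} (hn : 0 < n) {k : ℤ} {x : ℝ}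
    (h : k ≠ ⌊(n:ℝ)*x⌋) (h' : k ≠ ⌊(n:ℝ)*x⌋ + 1) : tentI n k x = 0 := by
  rw [tentI, Set.indicator_of_notMem]
  rw [mem_Ico_iff hn]
  rintro ⟨h1, h2⟩
  have hk1 : k - 1 ≤ ⌊(n:ℝ)*x⌋ := Int.le_floor.mpr (by push_cast; linarith)
  have hk2 : ⌊(n:ℝ)*x⌋ < k + 1 := Int.floor_lt.mpr (by push_cast; linarith)
  omega

lemma tsum_tentI_eq {n : ℕ} (hn : 0 < n) (f : ℝ → ℝ) (x : ℝ) :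
    ∑' k : ℤ, tentI n k x * f ((k:ℝ)/n)
      = tentI n ⌊(n:ℝ)*x⌋ x * f ((⌊(n:ℝ)*x⌋ : ℝ)/n)
        + tentI n (⌊(n:ℝ)*x⌋+1) x * f (((⌊(n:ℝ)*x⌋+1 : ℤ) : ℝ)/n) := by
  rw [tsum_eq_sum (s := {⌊(n:ℝ)*x⌋, ⌊(n:ℝ)*x⌋+1}) (fun k hk => by
    simp only [Finset.mem_insert, Finset.mem_singleton, not_or] at hk
    rw [tentI_eq_zero hn hk.1 hk.2, zero_mul])]
  rw [Finset.sum_pair (by omega)]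

lemma tsum_tentI {n : ℕ} (hn : 0 < n) (f : ℝ → ℝ) (x : ℝ) :
    ∑' k : ℤ, tentI n k x * f ((k:ℝ)/n) = interp f n x := by
  rw [tsum_tentI_eq hn f x, tentI_floor hn, tentI_floor_succ hn, interp]
  push_cast
  ring

lemma nnnorm_interp_le {n : ℕ} (hn : 0 < n) (f : ℝ → ℝ) (x : ℝ) :
    (‖interp f n x‖₊ : ENNReal) ≤ ∑' k : ℤ, (‖tentI n k x * f ((k:ℝ)/n)‖₊ : ENNReal) := by
  rw [← tsum_tentI hn f x, tsum_tentI_eq hn f x]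
  have h2 := ENNReal.sum_le_tsum
    (f := fun k : ℤ => (‖tentI n k x * f ((k:ℝ)/n)‖₊ : ENNReal)) {⌊(n:ℝ)*x⌋, ⌊(n:ℝ)*x⌋+1}
  rw [Finset.sum_pair (by omega)] at h2
  refine le_trans ?_ h2
  push_cast
  exact_mod_cast nnnorm_add_le _ _

/-! ### Convexity of the interpolation -/

lemma slope_cross {f : ℝ → ℝ} (hf : ConvexOn ℝ Set.univ f) {a b c : ℝ} (hab : a < b)
    (hbc : b < c) : (f b - f a) * (c - b) ≤ (f c - f b) * (b - a) :=
  (div_le_div_iff₀ (by linarith) (by linarith)).mp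
    (hf.slope_mono_adjacent (Set.mem_univ _) (Set.mem_univ _) hab hbc)

/-- The secant line of a convex function through the grid points `k/n` and `(k+1)/n`
lies below `f` at every grid point `j/n`. -/
lemma secant_le {n : ℕ} (hn : 0 < n) {f : ℝ → ℝ} (hf : ConvexOn ℝ Set.univ f) (k j : ℤ) :
    f ((k:ℝ)/n) + (f (((k:ℝ)+1)/n) - f ((k:ℝ)/n)) * ((j:ℝ) - (k:ℝ)) ≤ f ((j:ℝ)/n) := by
  have hN : (0:ℝ) < n := by exact_mod_cast hn
  have hne : (n:ℝ) ≠ 0 := hN.ne'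
  rcases lt_trichotomy j k with hj | hj | hj
  · have hjk : (j:ℝ) < k := by exact_mod_cast hj
    have h1 : (j:ℝ)/n < (k:ℝ)/n := by rw [div_lt_div_iff₀ hN hN]; nlinarith
    have h2 : (k:ℝ)/n < ((k:ℝ)+1)/n := by rw [div_lt_div_iff₀ hN hN]; nlinarith
    have H := slope_cross hf h1 h2
    have e1 : ((k:ℝ)+1)/n - (k:ℝ)/n = 1/n := by ring
    have e2 : (k:ℝ)/n - (j:ℝ)/n = ((k:ℝ)-(j:ℝ))/n := by ring
    rw [e1, e2] at H
    have H2 : f ((k:ℝ)/n) - f ((j:ℝ)/n)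
        ≤ (f (((k:ℝ)+1)/n) - f ((k:ℝ)/n)) * ((k:ℝ)-(j:ℝ)) := by
      have h3 := mul_le_mul_of_nonneg_right H hN.le
      calc f ((k:ℝ)/n) - f ((j:ℝ)/n)
          = (f ((k:ℝ)/n) - f ((j:ℝ)/n)) * (1/n) * n := by field_simp
        _ ≤ (f (((k:ℝ)+1)/n) - f ((k:ℝ)/n)) * (((k:ℝ)-(j:ℝ))/n) * n := h3
        _ = (f (((k:ℝ)+1)/n) - f ((k:ℝ)/n)) * ((k:ℝ)-(j:ℝ)) := by field_simp
    have : (f (((k:ℝ)+1)/n) - f ((k:ℝ)/n)) * ((j:ℝ) - (k:ℝ))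
        = -((f (((k:ℝ)+1)/n) - f ((k:ℝ)/n)) * ((k:ℝ)-(j:ℝ))) := by ring
    linarith
  · subst hj; simp
  · rcases eq_or_lt_of_le (by omega : k + 1 ≤ j) with hj1 | hj1
    · subst hj1
      have : ((k + 1 : ℤ) : ℝ) = (k:ℝ) + 1 := by push_cast; ring
      rw [this]
      have : (f (((k:ℝ)+1)/n) - f ((k:ℝ)/n)) * ((k:ℝ) + 1 - (k:ℝ))
          = f (((k:ℝ)+1)/n) - f ((k:ℝ)/n) := by ring
      linarith
    · have hjk : (k:ℝ) + 1 < (j:ℝ) := by exact_mod_cast hj1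
      have h1 : (k:ℝ)/n < ((k:ℝ)+1)/n := by rw [div_lt_div_iff₀ hN hN]; nlinarith
      have h2 : ((k:ℝ)+1)/n < (j:ℝ)/n := by rw [div_lt_div_iff₀ hN hN]; nlinarith
      have H := slope_cross hf h1 h2
      have e1 : (j:ℝ)/n - ((k:ℝ)+1)/n = ((j:ℝ)-(k:ℝ)-1)/n := by ring
      have e2 : ((k:ℝ)+1)/n - (k:ℝ)/n = 1/n := by ring
      rw [e1, e2] at H
      have H2 : (f (((k:ℝ)+1)/n) - f ((k:ℝ)/n)) * ((j:ℝ)-(k:ℝ)-1)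
          ≤ f ((j:ℝ)/n) - f (((k:ℝ)+1)/n) := by
        have h3 := mul_le_mul_of_nonneg_right H hN.le
        calc (f (((k:ℝ)+1)/n) - f ((k:ℝ)/n)) * ((j:ℝ)-(k:ℝ)-1)
            = (f (((k:ℝ)+1)/n) - f ((k:ℝ)/n)) * (((j:ℝ)-(k:ℝ)-1)/n) * n := by field_simp
          _ ≤ (f ((j:ℝ)/n) - f (((k:ℝ)+1)/n)) * (1/n) * n := h3
          _ = f ((j:ℝ)/n) - f (((k:ℝ)+1)/n) := by field_simp
      have : (f (((k:ℝ)+1)/n) - f ((k:ℝ)/n)) * ((j:ℝ) - (k:ℝ))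
          = (f (((k:ℝ)+1)/n) - f ((k:ℝ)/n)) * ((j:ℝ)-(k:ℝ)-1)
            + (f (((k:ℝ)+1)/n) - f ((k:ℝ)/n)) := by ring
      linarith

lemma line_le_interp {n : ℕ} (hn : 0 < n) {f : ℝ → ℝ} (hf : ConvexOn ℝ Set.univ f)
    (k : ℤ) (x : ℝ) :
    f ((k:ℝ)/n) + (f (((k:ℝ)+1)/n) - f ((k:ℝ)/n)) * ((n:ℝ)*x - (k:ℝ)) ≤ interp f n x := by
  set m := ⌊(n:ℝ)*x⌋ with hm
  have ht0 : (0:ℝ) ≤ (n:ℝ)*x - (m:ℝ) := sub_nonneg.mpr (Int.floor_le _)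
  have ht1 : (n:ℝ)*x - (m:ℝ) ≤ 1 := by
    have := Int.lt_floor_add_one ((n:ℝ)*x); rw [← hm] at this; linarith
  have h1 := secant_le hn hf k m
  have h2 := secant_le hn hf k (m+1)
  push_cast at h2
  have g1 := mul_le_mul_of_nonneg_left h1 (by linarith : (0:ℝ) ≤ 1 - ((n:ℝ)*x - (m:ℝ)))
  have g2 := mul_le_mul_of_nonneg_left h2 ht0
  rw [interp, ← hm]
  nlinarith [g1, g2]

lemma interp_convexOn {n : ℕ} (hn : 0 < n) {f : ℝ → ℝ} (hf : ConvexOn ℝ Set.univ f) :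
    ConvexOn ℝ Set.univ (interp f n) := by
  refine ⟨convex_univ, ?_⟩
  intro x _ y _ a b ha hb hab
  simp only [smul_eq_mul]
  have hb' : b = 1 - a := by linarith
  subst hb'
  set m := ⌊(n:ℝ)*(a * x + (1 - a) * y)⌋ with hm
  have hattain : interp f n (a * x + (1 - a) * y)
      = f ((m:ℝ)/n) + (f (((m:ℝ)+1)/n) - f ((m:ℝ)/n))
          * ((n:ℝ)*(a * x + (1 - a) * y) - (m:ℝ)) := by
    rw [interp, ← hm]; ring
  rw [hattain]
  have k1 := line_le_interp hn hf m x
  have k2 := line_le_interp hn hf m y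
  nlinarith [mul_le_mul_of_nonneg_left k1 ha, mul_le_mul_of_nonneg_left k2 hb]

/-! ### Integrals against the grid discretisation -/

lemma integral_gridDisc {n : ℕ} (hn : 0 < n) {μ : Measure ℝ} [IsProbabilityMeasure μ]
    (f : ℝ → ℝ) (hf : Integrable f (gridDisc μ n)) :
    Integrable (interp f n) μ ∧ ∫ x, f x ∂(gridDisc μ n) = ∫ x, interp f n x ∂μ := by
  have hfin : ∑' k : ℤ, ENNReal.ofReal (gridWeight μ n k) * ‖f ((k:ℝ)/n)‖₊ < ⊤ := by
    have h2 := hf.2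
    rw [HasFiniteIntegral] at h2; rw [← lintegral_gridDisc]; exact h2
  have h_each : ∀ k : ℤ, ∫⁻ a, ‖tentI n k a * f ((k:ℝ)/n)‖₊ ∂μ
      = ENNReal.ofReal (gridWeight μ n k) * ‖f ((k:ℝ)/n)‖₊ := by
    intro k
    simp_rw [nnnorm_mul, ENNReal.coe_mul]
    rw [lintegral_mul_const _ (tentI_measurable n k).nnnorm.coe_nnreal_ennreal,
      lintegral_tentI hn]
  have hsum_ne : (∑' k : ℤ, ∫⁻ a, ‖tentI n k a * f ((k:ℝ)/n)‖₊ ∂μ) ≠ ⊤ := by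
    simp_rw [h_each]; exact hfin.ne
  have hfl : Measurable fun x : ℝ => ⌊(n:ℝ)*x⌋ :=
    Int.measurable_floor.comp (measurable_id.const_mul _)
  have hmeas : Measurable (interp f n) := by
    have hc : Measurable fun x : ℝ => ((⌊(n:ℝ)*x⌋ : ℝ)) :=
      (measurable_of_countable (fun k : ℤ => (k:ℝ))).comp hfl
    have hf1 : Measurable fun x : ℝ => f ((⌊(n:ℝ)*x⌋ : ℝ)/n) :=
      (measurable_of_countable (fun k : ℤ => f ((k:ℝ)/n))).comp hfl
    have hf2 : Measurable fun x : ℝ => f (((⌊(n:ℝ)*x⌋ : ℝ)+1)/n) :=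
      (measurable_of_countable (fun k : ℤ => f (((k:ℝ)+1)/n))).comp hfl
    exact ((measurable_const.sub ((measurable_id.const_mul _).sub hc)).mul hf1).add
      (((measurable_id.const_mul _).sub hc).mul hf2)
  have hint : Integrable (interp f n) μ := by
    refine ⟨hmeas.aestronglyMeasurable, ?_⟩
    rw [HasFiniteIntegral]
    calc ∫⁻ a, ‖interp f n a‖₊ ∂μ
        ≤ ∫⁻ a, ∑' k : ℤ, (‖tentI n k a * f ((k:ℝ)/n)‖₊ : ENNReal) ∂μ :=
          lintegral_mono fun a => nnnorm_interp_le hn f a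
      _ = ∑' k : ℤ, ∫⁻ a, ‖tentI n k a * f ((k:ℝ)/n)‖₊ ∂μ :=
          lintegral_tsum fun k =>
            (((tentI_measurable n k).mul_const _).nnnorm.coe_nnreal_ennreal).aemeasurable
      _ < ⊤ := lt_of_le_of_ne le_top hsum_ne
  refine ⟨hint, ?_⟩
  have hL : ∫ x, f x ∂(gridDisc μ n) = ∑' k : ℤ, gridWeight μ n k * f ((k:ℝ)/n) := by
    rw [gridDisc, integral_sum_measure (by rwa [gridDisc] at hf)]
    refine tsum_congr fun k => ?_
    rw [integral_smul_measure, integral_dirac,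
      ENNReal.toReal_ofReal (gridWeight_nonneg hn μ k), smul_eq_mul]
  have hR : ∫ x, interp f n x ∂μ = ∑' k : ℤ, gridWeight μ n k * f ((k:ℝ)/n) := by
    have h := integral_tsum (μ := μ) (f := fun (k : ℤ) (a : ℝ) => tentI n k a * f ((k:ℝ)/n))
      (fun k => ((tentI_measurable n k).mul_const _).aestronglyMeasurable) hsum_ne
    simp_rw [tsum_tentI hn f] at h
    rw [h]
    refine tsum_congr fun k => ?_
    rw [integral_mul_const, integral_tentI]
  rw [hL, hR]

/-- the grid discretisation preserves the convex order. -/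
theorem gridDisc_convexOrder (μ ν : Measure ℝ)
    (hμ : IsProbabilityMeasure μ) (hν : IsProbabilityMeasure ν)
    (hmomμ : Integrable (fun x : ℝ => x) μ) (hmomν : Integrable (fun x : ℝ => x) ν)
    (hcx : ConvexOrder μ ν) (n : ℕ) (hn : 0 < n) :
    ConvexOrder (gridDisc μ n) (gridDisc ν n) := by
  intro f hconv hint1 hint2
  obtain ⟨hIμ, hEμ⟩ := integral_gridDisc hn f hint1
  obtain ⟨hIν, hEν⟩ := integral_gridDisc hn f hint2
  rw [hEμ, hEν]
  exact hcx (interp f n) (interp_convexOn hn hconv) hIμ hIν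

end MMOT
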